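/- Let X be a set, I a nonempty finite set, and f_i : X → X for each i ∈ I. The following two statements are equivalent. (I) There exist a metric d on X and a comparison function φ : [0,∞) → [0,∞) such that (X,d) is complete and bounded and each f_i is a φ-contraction with respect to d. (II) (a) For every α ∈ Λ(I), the set ⋂_{n∈ℕ} X_{[α]_n} has a unique element, denoted a_α; and (b) whenever a_α ≠ a_β for α,β ∈ Λ(I), there exists n₀ ∈ ℕ such that X_{[α]_{n₀}} ∩ X_{[β]_{n₀}} = ∅. -/

import Mathlib

open Filter Topology Set

/-- `φ : [0,∞) → [0,∞)` is a comparison function: it maps `[0,∞)` into `[0,∞)`,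
is increasing, satisfies `φ t < t` for `t > 0`, and is right-continuous. -/
def IsComparisonFn (φ : ℝ → ℝ) : Prop :=
  (∀ t : ℝ, 0 ≤ t → 0 ≤ φ t) ∧
  MonotoneOn φ (Set.Ici (0 : ℝ)) ∧
  (∀ t : ℝ, 0 < t → φ t < t) ∧
  (∀ t : ℝ, 0 ≤ t → ContinuousWithinAt φ (Set.Ici t) t)

/-- `f_{α₁…αₙ} = f_{α₁} ∘ f_{α₂} ∘ … ∘ f_{αₙ}` (the identity for the empty word). -/
def WordMap {X I : Type*} (f : I → X → X) : List I → X → X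
  | [] => id
  | i :: w => f i ∘ WordMap f w

/-- `[α]_n`: the finite word consisting of the first `n` letters of the infinite word `α`. -/
def Pref {I : Type*} (α : ℕ → I) (n : ℕ) : List I := List.ofFn (fun k : Fin n => α (k : ℕ))

/-- `X_w = f_w(X)`, the image of the whole space under the word map. -/
def WordSet {X I : Type*} (f : I → X → X) (w : List I) : Set X := Set.range (WordMap f w)

/-- A family `(f_i)_{i ∈ I}` of self-maps of `X` has attractor if:
(a) for every infinite word `α`, `⋂ₙ X_{[α]ₙ}` has a unique element `a_α`;
(b) whenever `a_α ≠ a_β`, some `X_{[α]_{n₀}}` and `X_{[β]_{n₀}}` are disjoint. -/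
def HasAttractor {X I : Type*} (f : I → X → X) : Prop :=
  (∀ α : ℕ → I, ∃! a : X, ∀ n : ℕ, a ∈ WordSet f (Pref α n)) ∧
  (∀ α β : ℕ → I, ∀ a b : X,
    (∀ n : ℕ, a ∈ WordSet f (Pref α n)) → (∀ n : ℕ, b ∈ WordSet f (Pref β n)) →
    a ≠ b →
    ∃ n₀ : ℕ, WordSet f (Pref α n₀) ∩ WordSet f (Pref β n₀) = ∅)

section WordLemmas
variable {X I : Type*} (f : I → X → X)

lemma wordMap_append (u v : List I) (x : X) :
    WordMap f (u ++ v) x = WordMap f u (WordMap f v x) := by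
  induction u with
  | nil => rfl
  | cons i u ih => simp [WordMap, ih]

lemma wordSet_take_subset (w : List I) (n : ℕ) :
    WordSet f w ⊆ WordSet f (w.take n) := by
  intro x hx
  obtain ⟨y, hy⟩ := hx
  refine ⟨WordMap f (w.drop n) y, ?_⟩
  rw [← wordMap_append, List.take_append_drop]
  exact hy

lemma mem_wordSet_self (w : List I) (x : X) : WordMap f w x ∈ WordSet f w := ⟨x, rfl⟩

lemma wordSet_nonempty [Nonempty X] (w : List I) : (WordSet f w).Nonempty :=
  ⟨WordMap f w (Classical.arbitrary X), mem_wordSet_self f w _⟩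

lemma pref_length {α : ℕ → I} (n : ℕ) : (Pref α n).length = n := by
  simp [Pref]

lemma pref_take {α : ℕ → I} {n m : ℕ} (h : n ≤ m) : (Pref α m).take n = Pref α n := by
  apply List.ext_getElem
  · simp [Pref]; omega
  · intro k h1 h2
    simp [Pref, List.getElem_take]

lemma wordMap_cons (i : I) (w : List I) (x : X) :
    WordMap f (i :: w) x = f i (WordMap f w x) := rfl

lemma wordSet_cons (i : I) (w : List I) :
    WordSet f (i :: w) = f i '' WordSet f w := by
  show Set.range (f i ∘ WordMap f w) = _
  rw [Set.range_comp]; rfl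

lemma wordSet_concat (w : List I) (i : I) (x : X) :
    WordMap f (w ++ [i]) x = WordMap f w (f i x) := by
  rw [wordMap_append]; rfl

end WordLemmas

section VRel
set_option linter.unusedSectionVars false
variable {X I : Type*} [Nonempty X] (f : I → X → X)

/-- The level-`n` closeness relation. -/
def VRel (n : ℕ) : Set (X × X) :=
  {p | p.1 = p.2 ∨ ∃ w w' : List I, w.length = n ∧ w'.length = n ∧
    p.1 ∈ WordSet f w ∧ p.2 ∈ WordSet f w' ∧ (WordSet f w ∩ WordSet f w').Nonempty}

lemma vRel_diag (n : ℕ) (x : X) : (x, x) ∈ VRel f n := Or.inl rfl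

lemma vRel_symm {n : ℕ} {p : X × X} (h : p ∈ VRel f n) : (p.2, p.1) ∈ VRel f n := by
  rcases h with h | ⟨w, w', h1, h2, h3, h4, h5⟩
  · exact Or.inl h.symm
  · exact Or.inr ⟨w', w, h2, h1, h4, h3, h5.imp fun z hz => ⟨hz.2, hz.1⟩⟩

lemma vRel_antitone {n m : ℕ} (h : m ≤ n) : VRel f n ⊆ VRel (X := X) f m := by
  rintro ⟨x, y⟩ (h | ⟨w, w', h1, h2, h3, h4, z, hz1, hz2⟩)
  · exact Or.inl h
  · refine Or.inr ⟨w.take m, w'.take m, ?_, ?_, wordSet_take_subset f w m h3,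
      wordSet_take_subset f w' m h4, z, wordSet_take_subset f w m hz1,
      wordSet_take_subset f w' m hz2⟩
    · simp [List.length_take]; omega
    · simp [List.length_take]; omega

lemma vRel_zero (p : X × X) : p ∈ VRel f 0 := by
  refine Or.inr ⟨[], [], rfl, rfl, ?_, ?_, ?_⟩ <;>
    simp [WordSet, WordMap]

lemma vRel_shift {n : ℕ} {x y : X} (i : I) (h : (x, y) ∈ VRel f n) :
    (f i x, f i y) ∈ VRel f (n + 1) := by
  rcases h with h | ⟨w, w', h1, h2, h3, h4, z, hz1, hz2⟩
  · exact Or.inl (by rw [show x = y from h])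
  · refine Or.inr ⟨i :: w, i :: w', by simp [h1], by simp [h2], ?_, ?_, f i z, ?_, ?_⟩ <;>
      rw [wordSet_cons] <;> exact ⟨_, ‹_›, rfl⟩

lemma vRel_shift_word {n : ℕ} {x y : X} (w : List I) (h : (x, y) ∈ VRel f n) :
    (WordMap f w x, WordMap f w y) ∈ VRel f (w.length + n) := by
  induction w with
  | nil => simpa [WordMap] using h
  | cons i w ih =>
    have := vRel_shift f i ih
    simpa [wordMap_cons, Nat.succ_add, Nat.add_comm, Nat.add_assoc, Nat.add_left_comm] using
      vRel_antitone f (by omega) this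

lemma vRel_same_word (w : List I) (x y : X) :
    (WordMap f w x, WordMap f w y) ∈ VRel f w.length :=
  Or.inr ⟨w, w, rfl, rfl, mem_wordSet_self f w x, mem_wordSet_self f w y,
    (wordSet_nonempty f w).mono (by simp)⟩

end VRel

/-- König's lemma for finitely branching trees of lists. -/
lemma konig_lists {A : Type*} [Finite A] (P : List A → Prop)
    (hstab : ∀ l n, P l → P (l.take n))
    (hex : ∀ n, ∃ l : List A, l.length = n ∧ P l) :
    ∃ γ : ℕ → A, ∀ n, P (List.ofFn fun k : Fin n => γ k) := by
  classical
  haveI : Fintype A := Fintype.ofFinite A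
  -- extendability predicate
  set E : List A → Prop := fun l => ∀ n, ∃ l', P l' ∧ l'.length = l.length + n ∧ l <+: l' with hE
  have hE0 : E [] := by
    intro n
    obtain ⟨l', hlen, hP⟩ := hex n
    exact ⟨l', hP, by simpa using hlen, List.nil_prefix⟩
  have hEP : ∀ l, E l → P l := by
    intro l hl
    obtain ⟨l', hP, hlen, hpre⟩ := hl 0
    have : l = l' := List.IsPrefix.eq_of_length hpre (by omega)
    exact this ▸ hP
  have key : ∀ l, E l → ∃ a, E (l ++ [a]) := by
    intro l hl
    by_contra hno
    push_neg at hno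
    -- for each a, a bound n_a with no witness
    have hno' : ∀ a : A, ∃ n, ∀ l', P l' → l'.length = (l ++ [a]).length + n → ¬ (l ++ [a]) <+: l' := by
      intro a
      have h := hno a
      simp only [hE] at h
      push_neg at h
      exact h
    choose nb hnb using hno'
    set N : ℕ := (Finset.univ.sup nb) + 1 with hN
    obtain ⟨l', hP, hlen, hpre⟩ := hl N
    -- the next letter
    have hlt : l.length < l'.length := by omega
    have hltake : l = l'.take l.length := List.prefix_iff_eq_take.mp hpre
    obtain ⟨t, ht⟩ := hpre
    have htlen : t.length = N := by
      have := congrArg List.length ht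
      simp at this; omega
    have htne : t ≠ [] := by
      intro h; rw [h] at htlen; simp at htlen
    obtain ⟨a, t', hat⟩ := List.exists_cons_of_ne_nil htne
    -- l ++ [a] is a prefix of l'
    have hpre2 : (l ++ [a]) <+: l' := by
      refine ⟨t', ?_⟩
      rw [← ht, hat]; simp
    -- witness for the bound nb a
    have hwit : P (l'.take (l.length + 1 + nb a)) ∧ (l'.take (l.length + 1 + nb a)).length = (l ++ [a]).length + nb a ∧ (l ++ [a]) <+: l'.take (l.length + 1 + nb a) := by
      refine ⟨hstab _ _ hP, ?_, ?_⟩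
      · have hle : l.length + 1 + nb a ≤ l'.length := by
          have : nb a ≤ Finset.univ.sup nb := Finset.le_sup (Finset.mem_univ a)
          omega
        simp [List.length_take]
        omega
      · exact List.prefix_take_iff.mpr ⟨hpre2, by simp⟩
    exact hnb a _ hwit.1 hwit.2.1 hwit.2.2
  -- build the branch by recursion
  choose next hnext using key
  let step : (Σ' l : List A, E l) → (Σ' l : List A, E l) :=
    fun p => ⟨p.1 ++ [next p.1 p.2], hnext p.1 p.2⟩
  let L : ℕ → (Σ' l : List A, E l) := fun n => step^[n] ⟨[], hE0⟩
  have hLsucc : ∀ n, (L (n+1)).1 = (L n).1 ++ [next (L n).1 (L n).2] := by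
    intro n
    have : L (n+1) = step (L n) := Function.iterate_succ_apply' step n _
    rw [this]
  have hLlen : ∀ n, (L n).1.length = n := by
    intro n
    induction n with
    | zero => rfl
    | succ n ih => rw [hLsucc n]; simp [ih]
  refine ⟨fun n => next (L n).1 (L n).2, ?_⟩
  have hofn : ∀ n, (List.ofFn fun k : Fin n => next (L k.1).1 (L k.1).2) = (L n).1 := by
    intro n
    induction n with
    | zero => rfl
    | succ n ih =>
      rw [List.ofFn_succ']
      simp only [Fin.coe_castSucc, Fin.val_last]
      rw [ih, hLsucc n]
      simp [List.concat_eq_append]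
  intro n
  rw [hofn n]
  exact hEP _ (L n).2

section KonigApps
set_option linter.unusedSectionVars false
set_option maxHeartbeats 1000000
variable {X I : Type*} [Finite I] [Nonempty I] [Nonempty X] {f : I → X → X}

/-- build a list of tuples from equal-length lists -/
lemma exists_tuple_list_2 {n : ℕ} {w w' : List I} (h1 : w.length = n) (h2 : w'.length = n) :
    ∃ l : List (I × I), l.length = n ∧ l.map Prod.fst = w ∧ l.map Prod.snd = w' := by
  refine ⟨List.ofFn (fun k : Fin n => (w[(k : ℕ)]'(by omega), w'[(k : ℕ)]'(by omega))), by simp, ?_, ?_⟩ <;>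
  · apply List.ext_getElem
    · simp; omega
    · intro k hk1 hk2
      simp

lemma exists_tuple_list_4 {n : ℕ} {w1 w2 w3 w4 : List I} (h1 : w1.length = n)
    (h2 : w2.length = n) (h3 : w3.length = n) (h4 : w4.length = n) :
    ∃ l : List (I × I × I × I), l.length = n ∧ l.map (fun a => a.1) = w1 ∧
      l.map (fun a => a.2.1) = w2 ∧ l.map (fun a => a.2.2.1) = w3 ∧
      l.map (fun a => a.2.2.2) = w4 := by
  refine ⟨List.ofFn (fun k : Fin n => (w1[(k : ℕ)]'(by omega), w2[(k : ℕ)]'(by omega),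
    w3[(k : ℕ)]'(by omega), w4[(k : ℕ)]'(by omega))), by simp, ?_, ?_, ?_, ?_⟩ <;>
  · apply List.ext_getElem
    · simp; omega
    · intro k hk1 hk2
      simp

lemma map_ofFn_pref {A : Type*} (γ : ℕ → A) (g : A → I) (m : ℕ) :
    (List.ofFn fun k : Fin m => γ (k : ℕ)).map g = Pref (fun j => g (γ j)) m := by
  rw [List.map_ofFn]; rfl

/-- Separation: if `(x, y)` is in every `VRel f n`, then `x = y`. -/
lemma eq_of_mem_all_vRel
    (hB : ∀ α β : ℕ → I, ∀ a b : X,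
      (∀ n : ℕ, a ∈ WordSet f (Pref α n)) → (∀ n : ℕ, b ∈ WordSet f (Pref β n)) →
      a ≠ b → ∃ n₀ : ℕ, WordSet f (Pref α n₀) ∩ WordSet f (Pref β n₀) = ∅)
    {x y : X} (h : ∀ n, (x, y) ∈ VRel f n) : x = y := by
  by_contra hxy
  set P : List (I × I) → Prop := fun l =>
    x ∈ WordSet f (l.map Prod.fst) ∧ y ∈ WordSet f (l.map Prod.snd) ∧
      (WordSet f (l.map Prod.fst) ∩ WordSet f (l.map Prod.snd)).Nonempty with hP
  have hstab : ∀ l m, P l → P (l.take m) := by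
    intro l m ⟨ha, hb, hc⟩
    refine ⟨?_, ?_, ?_⟩
    · rw [List.map_take]; exact wordSet_take_subset f _ m ha
    · rw [List.map_take]; exact wordSet_take_subset f _ m hb
    · rw [List.map_take, List.map_take]
      exact hc.mono (Set.inter_subset_inter (wordSet_take_subset f _ m) (wordSet_take_subset f _ m))
  have hex : ∀ m, ∃ l : List (I × I), l.length = m ∧ P l := by
    intro m
    rcases h m with heq | ⟨w, w', h1, h2, h3, h4, h5⟩
    · exact absurd heq hxy
    · obtain ⟨l, hl, hf, hs⟩ := exists_tuple_list_2 h1 h2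
      exact ⟨l, hl, by simp only [hP]; rw [hf, hs]; exact ⟨h3, h4, h5⟩⟩
  obtain ⟨γ, hγ⟩ := konig_lists P hstab hex
  set α := fun j => (γ j).1 with hα
  set β := fun j => (γ j).2 with hβ
  have hmem : ∀ m, x ∈ WordSet f (Pref α m) ∧ y ∈ WordSet f (Pref β m) ∧
      (WordSet f (Pref α m) ∩ WordSet f (Pref β m)).Nonempty := by
    intro m
    have hm := hγ m
    simp only [hP] at hm
    rwa [map_ofFn_pref γ Prod.fst m, map_ofFn_pref γ Prod.snd m] at hm
  obtain ⟨n₀, hdisj⟩ := hB α β x y (fun m => (hmem m).1) (fun m => (hmem m).2.1) hxy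
  have := (hmem n₀).2.2
  rw [hdisj] at this
  exact Set.not_nonempty_empty this

/-- Composition lemma. -/
lemma vRel_comp
    (hA : ∀ α : ℕ → I, ∃! a : X, ∀ n : ℕ, a ∈ WordSet f (Pref α n))
    (hB : ∀ α β : ℕ → I, ∀ a b : X,
      (∀ n : ℕ, a ∈ WordSet f (Pref α n)) → (∀ n : ℕ, b ∈ WordSet f (Pref β n)) →
      a ≠ b → ∃ n₀ : ℕ, WordSet f (Pref α n₀) ∩ WordSet f (Pref β n₀) = ∅)
    (n : ℕ) : ∃ k, n ≤ k ∧ ∀ x y z : X,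
      (x, y) ∈ VRel f k → (y, z) ∈ VRel f k → (x, z) ∈ VRel f n := by
  by_contra hno
  push_neg at hno
  have hno' : ∀ k, n ≤ k → ∃ x y z : X, (x, y) ∈ VRel f k ∧ (y, z) ∈ VRel f k ∧
      (x, z) ∉ VRel f n := by
    intro k hk
    obtain ⟨x, y, z, h1, h2, h3⟩ := hno k hk
    exact ⟨x, y, z, h1, h2, h3⟩
  set P : List (I × I × I × I) → Prop := fun l =>
    ∃ x y z : X, x ∈ WordSet f (l.map fun a => a.1) ∧ y ∈ WordSet f (l.map fun a => a.2.1) ∧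
      y ∈ WordSet f (l.map fun a => a.2.2.1) ∧ z ∈ WordSet f (l.map fun a => a.2.2.2) ∧
      (WordSet f (l.map fun a => a.1) ∩ WordSet f (l.map fun a => a.2.1)).Nonempty ∧
      (WordSet f (l.map fun a => a.2.2.1) ∩ WordSet f (l.map fun a => a.2.2.2)).Nonempty ∧
      (n ≤ l.length →
        WordSet f ((l.map fun a => a.1).take n) ∩ WordSet f ((l.map fun a => a.2.2.2).take n) = ∅)
    with hP
  have hstab : ∀ l m, P l → P (l.take m) := by
    intro l m ⟨x, y, z, h1, h2, h3, h4, h5, h6, h7⟩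
    refine ⟨x, y, z, ?_, ?_, ?_, ?_, ?_, ?_, ?_⟩
    · rw [List.map_take]; exact wordSet_take_subset f _ m h1
    · rw [List.map_take]; exact wordSet_take_subset f _ m h2
    · rw [List.map_take]; exact wordSet_take_subset f _ m h3
    · rw [List.map_take]; exact wordSet_take_subset f _ m h4
    · rw [List.map_take, List.map_take]
      exact h5.mono (Set.inter_subset_inter (wordSet_take_subset f _ m) (wordSet_take_subset f _ m))
    · rw [List.map_take, List.map_take]
      exact h6.mono (Set.inter_subset_inter (wordSet_take_subset f _ m) (wordSet_take_subset f _ m))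
    · intro hnm
      rw [List.length_take] at hnm
      have hnl : n ≤ l.length := le_trans hnm (min_le_right _ _)
      have hnm' : n ≤ m := le_trans hnm (min_le_left _ _)
      rw [List.map_take, List.map_take, List.take_take, List.take_take,
        inf_eq_left.mpr hnm']
      exact h7 hnl
  have hexge : ∀ m, n ≤ m → ∃ l : List (I × I × I × I), l.length = m ∧ P l := by
    intro m hm
    obtain ⟨x, y, z, hxy, hyz, hxz⟩ := hno' m hm
    have hxyne : x ≠ y := by
      rintro rfl
      exact hxz (vRel_antitone f hm hyz)
    have hyzne : y ≠ z := by
      rintro rfl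
      exact hxz (vRel_antitone f hm hxy)
    rcases hxy with heq | ⟨w1, w2, hl1, hl2, hm1, hm2, hne12⟩
    · exact absurd heq hxyne
    rcases hyz with heq | ⟨w3, w4, hl3, hl4, hm3, hm4, hne34⟩
    · exact absurd heq hyzne
    obtain ⟨l, hl, hf1, hf2, hf3, hf4⟩ := exists_tuple_list_4 hl1 hl2 hl3 hl4
    refine ⟨l, hl, ?_⟩
    simp only [hP]
    refine ⟨x, y, z, by rw [hf1]; exact hm1, by rw [hf2]; exact hm2, by rw [hf3]; exact hm3,
      by rw [hf4]; exact hm4, by rw [hf1, hf2]; exact hne12, by rw [hf3, hf4]; exact hne34, ?_⟩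
    intro _
    rw [hf1, hf4]
    by_contra hne
    have hne' : (WordSet f (w1.take n) ∩ WordSet f (w4.take n)).Nonempty :=
      Set.nonempty_iff_ne_empty.mpr hne
    exact hxz (Or.inr ⟨w1.take n, w4.take n, by simp [List.length_take]; omega,
      by simp [List.length_take]; omega, wordSet_take_subset f _ n hm1,
      wordSet_take_subset f _ n hm4, hne'⟩)
  have hex : ∀ m, ∃ l : List (I × I × I × I), l.length = m ∧ P l := by
    intro m
    rcases le_or_gt n m with hm | hm
    · exact hexge m hm
    · obtain ⟨l, hl, hPl⟩ := hexge n le_rfl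
      exact ⟨l.take m, by simp [List.length_take]; omega, hstab l m hPl⟩
  obtain ⟨γ, hγ⟩ := konig_lists P hstab hex
  set α1 := fun j => (γ j).1 with hα1
  set α2 := fun j => (γ j).2.1 with hα2
  set α3 := fun j => (γ j).2.2.1 with hα3
  set α4 := fun j => (γ j).2.2.2 with hα4
  have hfact : ∀ m, (WordSet f (Pref α1 m) ∩ WordSet f (Pref α2 m)).Nonempty ∧
      (WordSet f (Pref α2 m) ∩ WordSet f (Pref α3 m)).Nonempty ∧
      (WordSet f (Pref α3 m) ∩ WordSet f (Pref α4 m)).Nonempty ∧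
      (n ≤ m → WordSet f (Pref α1 n) ∩ WordSet f (Pref α4 n) = ∅) := by
    intro m
    have hm := hγ m
    simp only [hP] at hm
    rw [map_ofFn_pref γ (fun a => a.1) m, map_ofFn_pref γ (fun a => a.2.1) m,
      map_ofFn_pref γ (fun a => a.2.2.1) m, map_ofFn_pref γ (fun a => a.2.2.2) m] at hm
    obtain ⟨x, y, z, h1, h2, h3, h4, h5, h6, h7⟩ := hm
    refine ⟨h5, ⟨y, h2, h3⟩, h6, ?_⟩
    intro hnm
    have := h7 (by simpa [pref_length] using hnm)
    rwa [pref_take hnm, pref_take hnm] at this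
  -- the four attractor points
  have hpt : ∀ α : ℕ → I, ∃ a : X, ∀ m, a ∈ WordSet f (Pref α m) := fun α => (hA α).exists
  obtain ⟨a1, ha1⟩ := hpt α1
  obtain ⟨a2, ha2⟩ := hpt α2
  obtain ⟨a3, ha3⟩ := hpt α3
  obtain ⟨a4, ha4⟩ := hpt α4
  have heq12 : a1 = a2 := by
    by_contra hne
    obtain ⟨n₀, hd⟩ := hB α1 α2 a1 a2 ha1 ha2 hne
    have := (hfact n₀).1
    rw [hd] at this
    exact Set.not_nonempty_empty this
  have heq23 : a2 = a3 := by
    by_contra hne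
    obtain ⟨n₀, hd⟩ := hB α2 α3 a2 a3 ha2 ha3 hne
    have := (hfact n₀).2.1
    rw [hd] at this
    exact Set.not_nonempty_empty this
  have heq34 : a3 = a4 := by
    by_contra hne
    obtain ⟨n₀, hd⟩ := hB α3 α4 a3 a4 ha3 ha4 hne
    have := (hfact n₀).2.2.1
    rw [hd] at this
    exact Set.not_nonempty_empty this
  have hdisj := (hfact n).2.2.2 le_rfl
  have : a1 ∈ WordSet f (Pref α1 n) ∩ WordSet f (Pref α4 n) :=
    ⟨ha1 n, by rw [heq12, heq23, heq34]; exact ha4 n⟩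
  rw [hdisj] at this
  exact this

end KonigApps

section EpsMetric
set_option linter.unusedSectionVars false
variable {X I : Type*} [Finite I] [Nonempty I] [Nonempty X] {f : I → X → X}

lemma exists_eps_metric
    (hA : ∀ α : ℕ → I, ∃! a : X, ∀ n : ℕ, a ∈ WordSet f (Pref α n))
    (hB : ∀ α β : ℕ → I, ∀ a b : X,
      (∀ n : ℕ, a ∈ WordSet f (Pref α n)) → (∀ n : ℕ, b ∈ WordSet f (Pref β n)) →
      a ≠ b → ∃ n₀ : ℕ, WordSet f (Pref α n₀) ∩ WordSet f (Pref β n₀) = ∅) :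
    ∃ ε : X → X → ℝ,
      (∀ x y, 0 ≤ ε x y) ∧ (∀ x, ε x x = 0) ∧ (∀ x y, ε x y = ε y x) ∧
      (∀ x y z, ε x z ≤ ε x y + ε y z) ∧
      (∀ n, ∃ δ : ℝ, 0 < δ ∧ ∀ x y : X, ε x y < δ → (x, y) ∈ VRel f n) ∧
      (∀ η : ℝ, 0 < η → ∃ n, ∀ p ∈ VRel f n, ε p.1 p.2 ≤ η) := by
  classical
  have hdir : Directed (fun a b : Set (X × X) => a ≥ b) (VRel f) := fun a b =>
    ⟨max a b, vRel_antitone f (le_max_left _ _), vRel_antitone f (le_max_right _ _)⟩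
  have hBasis : (⨅ n, 𝓟 (VRel f n)).HasBasis (fun _ : ℕ => True) (VRel f) :=
    Filter.hasBasis_iInf_principal hdir
  choose kc hkc1 hkc2 using vRel_comp hA hB
  letI U : UniformSpace X := UniformSpace.ofCore
    { uniformity := ⨅ n, 𝓟 (VRel f n)
      refl := le_iInf fun n => by
        rw [Filter.le_principal_iff]
        exact Filter.mem_principal.mpr (fun p hp => by
          rcases p with ⟨x, y⟩
          have : x = y := hp
          exact this ▸ vRel_diag f n x)
      symm := le_iInf fun n => by
        rw [Filter.le_principal_iff, Filter.mem_map]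
        exact Filter.mem_iInf_of_mem n (Filter.mem_principal.mpr fun p hp => vRel_symm f hp)
      comp := le_iInf fun n => by
        rw [Filter.le_principal_iff]
        refine Filter.mem_of_superset (Filter.mem_lift' (Filter.mem_iInf_of_mem (kc n)
          (Filter.mem_principal_self _))) ?_
        rintro ⟨x, z⟩ ⟨y, hxy, hyz⟩
        exact hkc2 n x y z hxy hyz }
  haveI hCG : (uniformity X).IsCountablyGenerated := hBasis.isCountablyGenerated
  obtain ⟨PM, hPM⟩ := UniformSpace.metrizable_uniformity X
  have hUeq : @uniformity X PM.toUniformSpace = ⨅ n, 𝓟 (VRel f n) := by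
    rw [hPM]; rfl
  refine ⟨fun x y => @dist X PM.toDist x y, fun x y => @dist_nonneg X PM x y,
    fun x => @dist_self X PM x, fun x y => @dist_comm X PM x y,
    fun x y z => @dist_triangle X PM x y z, ?_, ?_⟩
  · intro n
    have hmem : VRel f n ∈ @uniformity X PM.toUniformSpace := by
      rw [hUeq]; exact hBasis.mem_of_mem trivial
    obtain ⟨δ, hδ, hδ2⟩ := (@Metric.mem_uniformity_dist X PM _).mp hmem
    exact ⟨δ, hδ, fun x y h => hδ2 h⟩
  · intro η hη
    have hball : {p : X × X | @dist X PM.toDist p.1 p.2 < η} ∈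
        @uniformity X PM.toUniformSpace := @Metric.dist_mem_uniformity X PM η hη
    rw [hUeq] at hball
    obtain ⟨n, -, hsub⟩ := hBasis.mem_iff.mp hball
    exact ⟨n, fun p hp => le_of_lt (hsub hp)⟩

end EpsMetric

section Backward
set_option linter.unusedSectionVars false
set_option maxHeartbeats 2000000
variable {X I : Type*} [Finite I] [Nonempty I] [Nonempty X] {f : I → X → X}

lemma backward_direction
    (hA : ∀ α : ℕ → I, ∃! a : X, ∀ n : ℕ, a ∈ WordSet f (Pref α n))
    (hB : ∀ α β : ℕ → I, ∀ a b : X,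
      (∀ n : ℕ, a ∈ WordSet f (Pref α n)) → (∀ n : ℕ, b ∈ WordSet f (Pref β n)) →
      a ≠ b → ∃ n₀ : ℕ, WordSet f (Pref α n₀) ∩ WordSet f (Pref β n₀) = ∅) :
    ∃ (m : MetricSpace X) (φ : ℝ → ℝ),
      IsComparisonFn φ ∧
      @CompleteSpace X m.toUniformSpace ∧
      (∃ C : ℝ, ∀ x y : X, m.dist x y ≤ C) ∧
      (∀ i : I, ∀ x y : X, m.dist (f i x) (f i y) ≤ φ (m.dist x y)) := by
  classical
  haveI : Nonempty (List I) := ⟨[]⟩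
  obtain ⟨ε, hε_nonneg, hε_self, hε_symm, hε_tri, h5, h6⟩ := exists_eps_metric hA hB
  choose δfn hδ_pos hδ_V using h5
  choose kc hkc1 hkc2 using vRel_comp hA hB
  set E : X → X → ℝ := fun x y => min (ε x y) 1 with hE_def
  have hE_nonneg : ∀ x y, 0 ≤ E x y := fun x y => le_min (hε_nonneg x y) one_pos.le
  have hE_le_one : ∀ x y, E x y ≤ 1 := fun x y => min_le_right _ _
  have hE_self : ∀ x, E x x = 0 := fun x => by simp [hE_def, hε_self x]
  have hE_symm : ∀ x y, E x y = E y x := fun x y => by simp [hE_def, hε_symm x y]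
  have hE_tri : ∀ x y z, E x z ≤ E x y + E y z := by
    intro x y z
    rcases le_or_gt 1 (ε x y) with h | h
    · calc E x z ≤ 1 := hE_le_one x z
        _ ≤ E x y + E y z := by
          have : E x y = 1 := min_eq_right h
          have h2 := hE_nonneg y z
          linarith
    rcases le_or_gt 1 (ε y z) with h' | h'
    · calc E x z ≤ 1 := hE_le_one x z
        _ ≤ E x y + E y z := by
          have : E y z = 1 := min_eq_right h'
          have h2 := hE_nonneg x y
          linarith
    · calc E x z ≤ ε x z := min_le_left _ _
        _ ≤ ε x y + ε y z := hε_tri x y z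
        _ = E x y + E y z := by
          simp only [hE_def]
          rw [min_eq_left h.le, min_eq_left h'.le]
  have hE_V : ∀ n (x y : X), E x y < min (δfn n) 1 → (x, y) ∈ VRel f n := by
    intro n x y h
    apply hδ_V n x y
    by_contra hge
    push_neg at hge
    have hmin : min (δfn n) 1 ≤ E x y := by
      simp only [hE_def]
      exact le_min (le_trans (min_le_left _ _) hge) (min_le_right _ _)
    exact absurd h (not_lt.mpr hmin)
  have hV_E : ∀ η : ℝ, 0 < η → ∃ n, ∀ x y : X, (x, y) ∈ VRel f n → E x y ≤ η := by
    intro η hη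
    obtain ⟨n, hn⟩ := h6 η hη
    exact ⟨n, fun x y h => le_trans (min_le_left _ _) (hn (x, y) h)⟩
  -- level diameters
  obtain ⟨x₀⟩ := ‹Nonempty X›
  set Dbar : ℕ → ℝ := fun n => sSup ((fun p : X × X => E p.1 p.2) '' VRel f n) with hDbar_def
  have hDbar_bdd : ∀ n, BddAbove ((fun p : X × X => E p.1 p.2) '' VRel f n) := by
    intro n
    refine ⟨1, ?_⟩
    rintro r ⟨p, -, rfl⟩
    exact hE_le_one _ _
  have hDbar_ne : ∀ n, ((fun p : X × X => E p.1 p.2) '' VRel f n).Nonempty :=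
    fun n => ⟨E x₀ x₀, ⟨(x₀, x₀), vRel_diag f n x₀, rfl⟩⟩
  have hDbar_le : ∀ n (x y : X), (x, y) ∈ VRel f n → E x y ≤ Dbar n :=
    fun n x y h => le_csSup (hDbar_bdd n) ⟨(x, y), h, rfl⟩
  have hDbar_nonneg : ∀ n, 0 ≤ Dbar n := fun n => by
    have := hDbar_le n x₀ x₀ (vRel_diag f n x₀)
    rwa [hE_self x₀] at this
  have hDbar_le_one : ∀ n, Dbar n ≤ 1 := fun n => csSup_le (hDbar_ne n) (by
    rintro r ⟨p, -, rfl⟩; exact hE_le_one _ _)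
  have hDbar_anti : ∀ m n, m ≤ n → Dbar n ≤ Dbar m := by
    intro m n h
    apply csSup_le_csSup (hDbar_bdd m) (hDbar_ne n)
    rintro r ⟨p, hp, rfl⟩
    exact ⟨p, vRel_antitone f h hp, rfl⟩
  have hDbar_small : ∀ η : ℝ, 0 < η → ∃ n, Dbar n ≤ η := by
    intro η hη
    obtain ⟨n, hn⟩ := hV_E η hη
    exact ⟨n, csSup_le (hDbar_ne n) (by rintro r ⟨⟨a, b⟩, hp, rfl⟩; exact hn a b hp)⟩
  set Dhat : ℕ → ℝ := fun n => Dbar n + (1 / 2) ^ n with hDhat_def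
  have hDhat_pos : ∀ n, 0 < Dhat n := fun n => by
    have := hDbar_nonneg n
    have : (0:ℝ) < (1/2)^n := by positivity
    simp only [hDhat_def]
    nlinarith [hDbar_nonneg n]
  have hDhat_anti : ∀ m n, m ≤ n → Dhat n ≤ Dhat m := by
    intro m n h
    simp only [hDhat_def]
    have h1 := hDbar_anti m n h
    have h2 : ((1:ℝ)/2) ^ n ≤ (1/2) ^ m :=
      pow_le_pow_of_le_one (by norm_num) (by norm_num) h
    linarith
  have hDhat_strict : ∀ n, Dhat (n + 1) < Dhat n := by
    intro n
    simp only [hDhat_def]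
    have h1 := hDbar_anti n (n + 1) (Nat.le_succ n)
    have h2 : ((1:ℝ)/2) ^ (n+1) < (1/2) ^ n := by
      apply pow_lt_pow_right_of_lt_one₀ <;> norm_num
    linarith
  have hDhat_one_le : (1:ℝ) ≤ Dhat 0 := by
    simp only [hDhat_def]
    have := hDbar_nonneg 0
    norm_num
    linarith
  have hDbar_le_Dhat : ∀ n, Dbar n ≤ Dhat n := fun n => by
    simp only [hDhat_def]
    have : (0:ℝ) < (1/2)^n := by positivity
    linarith
  have hDhat_small : ∀ η : ℝ, 0 < η → ∃ n, Dhat n ≤ η := by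
    intro η hη
    obtain ⟨n1, hn1⟩ := hDbar_small (η / 2) (by positivity)
    obtain ⟨n2, hn2⟩ := exists_pow_lt_of_lt_one (show (0:ℝ) < η/2 by positivity)
      (show (1:ℝ)/2 < 1 by norm_num)
    refine ⟨max n1 n2, ?_⟩
    simp only [hDhat_def]
    have e1 : Dbar (max n1 n2) ≤ Dbar n1 := hDbar_anti n1 _ (le_max_left _ _)
    have e2 : ((1:ℝ)/2) ^ (max n1 n2) ≤ (1/2) ^ n2 :=
      pow_le_pow_of_le_one (by norm_num) (by norm_num) (le_max_right _ _)
    linarith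
  -- the gauge scale
  set c : ℕ → ℝ := fun n => Real.sqrt (Dhat n) with hc_def
  have hc_pos : ∀ n, 0 < c n := fun n => Real.sqrt_pos.mpr (hDhat_pos n)
  have hc_anti : ∀ m n, m ≤ n → c n ≤ c m := fun m n h =>
    Real.sqrt_le_sqrt (hDhat_anti m n h)
  have hc_strict : ∀ n, c (n + 1) < c n := fun n =>
    Real.sqrt_lt_sqrt (hDhat_pos (n + 1)).le (hDhat_strict n)
  have hc_one_le : (1:ℝ) ≤ c 0 := by
    rw [hc_def]
    rw [show (1:ℝ) = Real.sqrt 1 by simp]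
    exact Real.sqrt_le_sqrt hDhat_one_le
  have hc_small : ∀ η : ℝ, 0 < η → ∃ n, c n ≤ η := by
    intro η hη
    obtain ⟨n, hn⟩ := hDhat_small (η ^ 2) (by positivity)
    refine ⟨n, ?_⟩
    calc c n ≤ Real.sqrt (η ^ 2) := Real.sqrt_le_sqrt hn
      _ = η := by rw [Real.sqrt_sq hη.le]
  have hDhat_div : ∀ n, Dhat n / c n = c n := fun n => Real.div_sqrt
  -- the metric terms
  set T : X → X → List I → ℝ :=
    fun x y w => min (E (WordMap f w x) (WordMap f w y)) (Dhat w.length) / c w.length with hT_def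
  have hT_nonneg : ∀ x y w, 0 ≤ T x y w := by
    intro x y w
    apply div_nonneg _ (hc_pos _).le
    exact le_min (hE_nonneg _ _) (hDhat_pos _).le
  have hT_le_c : ∀ x y w, T x y w ≤ c w.length := by
    intro x y w
    rw [hT_def]
    calc min (E (WordMap f w x) (WordMap f w y)) (Dhat w.length) / c w.length
        ≤ Dhat w.length / c w.length :=
          div_le_div_of_nonneg_right (min_le_right _ _) (hc_pos _).le
      _ = c w.length := hDhat_div _
  set D : X → X → ℝ := fun x y => ⨆ w : List I, T x y w with hD_def
  have hT_bdd : ∀ x y, BddAbove (Set.range (T x y)) := by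
    intro x y
    refine ⟨c 0, ?_⟩
    rintro r ⟨w, rfl⟩
    exact le_trans (hT_le_c x y w) (hc_anti 0 _ (Nat.zero_le _))
  have hT_le_D : ∀ x y w, T x y w ≤ D x y := fun x y w => le_ciSup (hT_bdd x y) w
  have hD_le_c0 : ∀ x y, D x y ≤ c 0 := by
    intro x y
    apply ciSup_le
    intro w
    exact le_trans (hT_le_c x y w) (hc_anti 0 _ (Nat.zero_le _))
  have hD_nonneg : ∀ x y, 0 ≤ D x y := fun x y => le_trans (hT_nonneg x y []) (hT_le_D x y [])
  have hD_self : ∀ x, D x x = 0 := by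
    intro x
    have hT0 : ∀ w : List I, T x x w = 0 := by
      intro w
      rw [hT_def]
      simp only
      rw [hE_self, min_eq_left (hDhat_pos _).le, zero_div]
    rw [hD_def]
    simp only [hT0]
    exact ciSup_const
  have hD_comm : ∀ x y, D x y = D y x := by
    intro x y
    rw [hD_def]
    simp only
    congr 1
    funext w
    rw [hT_def]
    simp only
    rw [hE_symm]
  have hD_triangle : ∀ x y z, D x z ≤ D x y + D y z := by
    intro x y z
    apply ciSup_le
    intro w
    have hsub : T x z w ≤ T x y w + T y z w := by
      rw [hT_def]
      simp only
      rw [← add_div]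
      apply div_le_div_of_nonneg_right _ (hc_pos _).le
      have htr := hE_tri (WordMap f w x) (WordMap f w y) (WordMap f w z)
      rcases le_total (E (WordMap f w x) (WordMap f w y)) (Dhat w.length) with h1 | h1
      · rcases le_total (E (WordMap f w y) (WordMap f w z)) (Dhat w.length) with h2 | h2
        · rw [min_eq_left h1, min_eq_left h2]
          exact le_trans (min_le_left _ _) htr
        · rw [min_eq_left h1, min_eq_right h2]
          have := hE_nonneg (WordMap f w x) (WordMap f w y)
          have := min_le_right (E (WordMap f w x) (WordMap f w z)) (Dhat w.length)
          linarith
      · rw [min_eq_right h1]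
        have h3 : 0 ≤ min (E (WordMap f w y) (WordMap f w z)) (Dhat w.length) :=
          le_min (hE_nonneg _ _) (hDhat_pos _).le
        have := min_le_right (E (WordMap f w x) (WordMap f w z)) (Dhat w.length)
        linarith
    exact le_trans hsub (add_le_add (hT_le_D x y w) (hT_le_D y z w))
  have hD_eq : ∀ x y, D x y = 0 → x = y := by
    intro x y h
    have h1 : T x y [] = 0 :=
      le_antisymm (h ▸ hT_le_D x y []) (hT_nonneg x y [])
    rw [hT_def] at h1
    simp only [List.length_nil] at h1
    have h2 : min (E (WordMap f [] x) (WordMap f [] y)) (Dhat 0) = 0 := by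
      field_simp [(hc_pos 0).ne'] at h1
      rw [mul_zero] at h1
      exact h1
    have h3 : E x y = 0 := by
      have hExy : E (WordMap f [] x) (WordMap f [] y) = E x y := rfl
      rw [hExy] at h2
      rcases min_eq_iff.mp h2 with ⟨he, -⟩ | ⟨he, -⟩
      · exact he
      · exfalso
        have := hDhat_pos 0
        linarith
    apply eq_of_mem_all_vRel hB
    intro n
    apply hE_V n x y
    rw [h3]
    exact lt_min (hδ_pos n) one_pos
  -- word-level diameter bound
  have hE_word : ∀ (w : List I) (x y : X),
      E (WordMap f w x) (WordMap f w y) ≤ Dbar w.length := by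
    intro w x y
    exact hDbar_le w.length _ _ (vRel_same_word f w x y)
  -- the comparison function
  set φfn : ℝ → ℝ := fun u => ⨆ n : ℕ, (c (n+1) / c n) * min (max u 0) (c (n+1)) with hφ_def
  have hratio_pos : ∀ n, 0 < c (n+1) / c n := fun n => div_pos (hc_pos _) (hc_pos _)
  have hratio_le_one : ∀ n, c (n+1) / c n ≤ 1 := fun n =>
    (div_le_one (hc_pos n)).mpr (hc_strict n).le
  have hratio_lt_one : ∀ n, c (n+1) / c n < 1 := fun n =>
    (div_lt_one (hc_pos n)).mpr (hc_strict n)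
  have hφterm_nonneg : ∀ n u, 0 ≤ (c (n+1) / c n) * min (max u 0) (c (n+1)) := by
    intro n u
    apply mul_nonneg (hratio_pos n).le
    exact le_min (le_max_right _ _) (hc_pos _).le
  have hφterm_le : ∀ n u, (c (n+1) / c n) * min (max u 0) (c (n+1)) ≤ max u 0 := by
    intro n u
    calc (c (n+1) / c n) * min (max u 0) (c (n+1)) ≤ min (max u 0) (c (n+1)) :=
        mul_le_of_le_one_left (le_min (le_max_right _ _) (hc_pos _).le) (hratio_le_one n)
      _ ≤ max u 0 := min_le_left _ _
  have hφ_bdd : ∀ u, BddAbove (Set.range fun n : ℕ => (c (n+1) / c n) * min (max u 0) (c (n+1))) := by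
    intro u
    refine ⟨max u 0, ?_⟩
    rintro r ⟨n, rfl⟩
    exact hφterm_le n u
  have hφ_ge_term : ∀ u n, (c (n+1) / c n) * min (max u 0) (c (n+1)) ≤ φfn u :=
    fun u n => le_ciSup (hφ_bdd u) n
  have hφ_nonneg : ∀ u, 0 ≤ φfn u := fun u => le_trans (hφterm_nonneg 0 u) (hφ_ge_term u 0)
  have hφ_mono : Monotone φfn := by
    intro u v huv
    apply ciSup_le
    intro n
    refine le_trans ?_ (hφ_ge_term v n)
    apply mul_le_mul_of_nonneg_left _ (hratio_pos n).le
    exact min_le_min (max_le_max huv (le_refl 0)) (le_refl _)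
  have hφ_lt : ∀ u : ℝ, 0 < u → φfn u < u := by
    intro u hu
    obtain ⟨M, hM⟩ := hc_small (u / 2) (by positivity)
    rcases Nat.eq_zero_or_pos M with rfl | hMpos
    · have : φfn u ≤ u / 2 := by
        apply ciSup_le
        intro n
        calc (c (n+1) / c n) * min (max u 0) (c (n+1)) ≤ min (max u 0) (c (n+1)) :=
            mul_le_of_le_one_left (le_min (le_max_right _ _) (hc_pos _).le) (hratio_le_one n)
          _ ≤ c (n+1) := min_le_right _ _
          _ ≤ c 0 := hc_anti 0 _ (Nat.zero_le _)
          _ ≤ u / 2 := hM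
      linarith
    · have hne : (Finset.range M).Nonempty := ⟨0, Finset.mem_range.mpr hMpos⟩
      set R : ℝ := (Finset.range M).sup' hne (fun n => c (n+1) / c n) with hR_def
      have hR_lt_one : R < 1 := by
        rw [hR_def, Finset.sup'_lt_iff hne]
        intro n _
        exact hratio_lt_one n
      have hR_nonneg : 0 ≤ R := le_trans (hratio_pos 0).le
        (Finset.le_sup' (fun n => c (n+1) / c n) (Finset.mem_range.mpr hMpos))
      have hbound : φfn u ≤ max (R * u) (u / 2) := by
        apply ciSup_le
        intro n
        rcases lt_or_ge n M with hn | hn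
        · refine le_trans ?_ (le_max_left _ _)
          calc (c (n+1) / c n) * min (max u 0) (c (n+1))
              ≤ (c (n+1) / c n) * u := by
                apply mul_le_mul_of_nonneg_left _ (hratio_pos n).le
                exact le_trans (min_le_left _ _) (max_le (le_refl u) hu.le)
            _ ≤ R * u := by
                apply mul_le_mul_of_nonneg_right _ hu.le
                exact Finset.le_sup' (fun n => c (n+1) / c n) (Finset.mem_range.mpr hn)
        · refine le_trans ?_ (le_max_right _ _)
          calc (c (n+1) / c n) * min (max u 0) (c (n+1)) ≤ min (max u 0) (c (n+1)) :=
              mul_le_of_le_one_left (le_min (le_max_right _ _) (hc_pos _).le) (hratio_le_one n)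
            _ ≤ c (n+1) := min_le_right _ _
            _ ≤ c M := hc_anti M (n+1) (by omega)
            _ ≤ u / 2 := hM
      have h1 : R * u < u := by nlinarith
      have h2 : u / 2 < u := by linarith
      exact lt_of_le_of_lt hbound (max_lt h1 h2)
  have habs_min : ∀ a b k : ℝ, |min a k - min b k| ≤ |a - b| := by
    intro a b k
    rcases le_total a k with h1 | h1 <;> rcases le_total b k with h2 | h2 <;>
      simp [min_eq_left, min_eq_right, h1, h2, abs_sub_le_iff] <;>
      constructor <;> linarith [le_abs_self (a - b), neg_abs_le (a - b)]
  have habs_max : ∀ a b : ℝ, |max a 0 - max b 0| ≤ |a - b| := by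
    intro a b
    rcases le_total a 0 with h1 | h1 <;> rcases le_total b 0 with h2 | h2 <;>
      rw [abs_sub_le_iff] <;> constructor <;>
      simp only [max_eq_left, max_eq_right, h1, h2] <;>
      linarith [le_abs_self (a - b), neg_abs_le (a - b), abs_nonneg (a - b)]
  have hφ_lip : ∀ u v : ℝ, φfn u ≤ φfn v + |u - v| := by
    intro u v
    apply ciSup_le
    intro n
    have key : (c (n+1) / c n) * min (max u 0) (c (n+1)) ≤
        (c (n+1) / c n) * min (max v 0) (c (n+1)) + |u - v| := by
      have h1 : min (max u 0) (c (n+1)) - min (max v 0) (c (n+1)) ≤ |u - v| := by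
        have := habs_min (max u 0) (max v 0) (c (n+1))
        have h2 := habs_max u v
        calc min (max u 0) (c (n+1)) - min (max v 0) (c (n+1))
            ≤ |min (max u 0) (c (n+1)) - min (max v 0) (c (n+1))| := le_abs_self _
          _ ≤ |max u 0 - max v 0| := this
          _ ≤ |u - v| := h2
      nlinarith [hratio_le_one n, hratio_pos n, abs_nonneg (u - v),
        le_min (le_max_right v 0) (hc_pos (n+1)).le]
    exact le_trans key (add_le_add_left (hφ_ge_term v n) _)
  have hφ_cont : Continuous φfn := by
    have : LipschitzWith 1 φfn := by
      apply LipschitzWith.of_dist_le_mul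
      intro u v
      rw [Real.dist_eq, Real.dist_eq, NNReal.coe_one, one_mul]
      rw [abs_sub_le_iff]
      constructor
      · linarith [hφ_lip u v]
      · linarith [hφ_lip v u, abs_sub_comm u v]
    exact this.continuous
  have hφ_comparison : IsComparisonFn φfn :=
    ⟨fun t _ => hφ_nonneg t, hφ_mono.monotoneOn _, hφ_lt,
      fun t _ => hφ_cont.continuousWithinAt⟩
  -- key contraction inequality
  have hkey : ∀ (n : ℕ) (s : ℝ), 0 ≤ s → s ≤ Dbar (n+1) → s / c n ≤ φfn (s / c (n+1)) := by
    intro n s hs hsD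
    have hu_nonneg : 0 ≤ s / c (n+1) := div_nonneg hs (hc_pos _).le
    have hu_le : s / c (n+1) ≤ c (n+1) := by
      calc s / c (n+1) ≤ Dhat (n+1) / c (n+1) :=
          div_le_div_of_nonneg_right (le_trans hsD (hDbar_le_Dhat _)) (hc_pos _).le
        _ = c (n+1) := hDhat_div _
    refine le_trans ?_ (hφ_ge_term (s / c (n+1)) n)
    rw [max_eq_left hu_nonneg, min_eq_left hu_le]
    rw [show (c (n+1) / c n) * (s / c (n+1)) = s / c n * (c (n+1) / c (n+1)) by ring,
      div_self (hc_pos (n+1)).ne', mul_one]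
  -- contraction
  have hD_contr : ∀ (i : I) (x y : X), D (f i x) (f i y) ≤ φfn (D x y) := by
    intro i x y
    apply ciSup_le
    intro w
    have hvlen : (w ++ [i]).length = w.length + 1 := by simp
    have hEv : E (WordMap f w (f i x)) (WordMap f w (f i y)) =
        E (WordMap f (w ++ [i]) x) (WordMap f (w ++ [i]) y) := by
      rw [wordSet_concat f w i x, wordSet_concat f w i y]
    have hs_nonneg : 0 ≤ E (WordMap f (w ++ [i]) x) (WordMap f (w ++ [i]) y) := hE_nonneg _ _
    have hsD : E (WordMap f (w ++ [i]) x) (WordMap f (w ++ [i]) y) ≤ Dbar (w.length + 1) := by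
      have := hE_word (w ++ [i]) x y
      rwa [hvlen] at this
    have hT1 : T (f i x) (f i y) w =
        E (WordMap f (w ++ [i]) x) (WordMap f (w ++ [i]) y) / c w.length := by
      rw [hT_def]
      simp only
      rw [hEv, min_eq_left (le_trans hsD (le_trans (hDbar_anti w.length (w.length+1)
        (Nat.le_succ _)) (hDbar_le_Dhat _)))]
    have hT2 : E (WordMap f (w ++ [i]) x) (WordMap f (w ++ [i]) y) / c (w.length + 1) ≤ D x y := by
      have heq : T x y (w ++ [i]) =
          E (WordMap f (w ++ [i]) x) (WordMap f (w ++ [i]) y) / c (w.length + 1) := by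
        rw [hT_def]
        simp only
        rw [hvlen, min_eq_left (le_trans hsD (hDbar_le_Dhat _))]
      exact heq ▸ hT_le_D x y (w ++ [i])
    calc T (f i x) (f i y) w
        = E (WordMap f (w ++ [i]) x) (WordMap f (w ++ [i]) y) / c w.length := hT1
      _ ≤ φfn (E (WordMap f (w ++ [i]) x) (WordMap f (w ++ [i]) y) / c (w.length + 1)) :=
          hkey w.length _ hs_nonneg hsD
      _ ≤ φfn (D x y) := hφ_mono hT2
  -- the metric space
  set m : MetricSpace X :=
    { dist := D
      dist_self := hD_self
      dist_comm := hD_comm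
      dist_triangle := hD_triangle
      eq_of_dist_eq_zero := fun {x y} h => hD_eq x y h } with hm_def
  have hcomplete : @CompleteSpace X m.toUniformSpace := by
    letI := m
    apply Metric.complete_of_cauchySeq_tendsto
    intro u hu
    -- pairs are eventually in every VRel
    have hVC : ∀ n, ∃ K, ∀ k l, K ≤ k → K ≤ l → (u k, u l) ∈ VRel f n := by
      intro n
      obtain ⟨K, hK⟩ := (Metric.cauchySeq_iff.mp hu) (min (δfn n) 1 / c 0)
        (div_pos (lt_min (hδ_pos n) one_pos) (hc_pos 0))
      refine ⟨K, fun k l hk hl => ?_⟩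
      have hd : D (u k) (u l) < min (δfn n) 1 / c 0 := hK k hk l hl
      have h1 : E (u k) (u l) / c 0 ≤ D (u k) (u l) := by
        have heq : T (u k) (u l) [] = E (u k) (u l) / c 0 := by
          rw [hT_def]
          simp only [List.length_nil]
          rw [min_eq_left (le_trans (hE_le_one _ _) hDhat_one_le)]
          rfl
        exact heq ▸ hT_le_D (u k) (u l) []
      have h2 : E (u k) (u l) < min (δfn n) 1 := by
        have h3 := lt_of_le_of_lt h1 hd
        exact (div_lt_div_iff_of_pos_right (hc_pos 0)).mp h3
      exact hE_V n _ _ h2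
    choose K0 hK0 using hVC
    set KK : ℕ → ℕ := fun n => (Finset.range (n+1)).sup K0 with hKK_def
    have hKK_le : ∀ n, K0 n ≤ KK n := fun n =>
      Finset.le_sup (Finset.mem_range.mpr (Nat.lt_succ_self n))
    have hKK_mono : ∀ a b : ℕ, a ≤ b → KK a ≤ KK b := by
      intro a b hab
      apply Finset.sup_mono
      intro t ht
      rw [Finset.mem_range] at *
      omega
    have hUV : ∀ n k l, KK n ≤ k → KK n ≤ l → (u k, u l) ∈ VRel f n :=
      fun n k l hk hl => hK0 n k l (le_trans (hKK_le n) hk) (le_trans (hKK_le n) hl)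
    -- convergence criterion
    have hconv : ∀ z : X, (∀ n, ∃ K, ∀ k, K ≤ k → (u k, z) ∈ VRel f n) →
        Tendsto u atTop (𝓝 z) := by
      intro z hz
      rw [Metric.tendsto_atTop]
      intro η hη
      obtain ⟨M, hM⟩ := hc_small (η / 2) (by positivity)
      obtain ⟨mlev, hmlev⟩ := hDbar_small (η / 2 * c M) (mul_pos (by positivity) (hc_pos M))
      obtain ⟨K, hK⟩ := hz mlev
      refine ⟨K, fun k hk => ?_⟩
      have hmem := hK k hk
      have hD_le : D (u k) z ≤ η / 2 := by
        apply ciSup_le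
        intro w
        rcases le_or_gt M w.length with hw | hw
        · exact le_trans (hT_le_c _ _ w) (le_trans (hc_anti M w.length hw) hM)
        · have hEw : E (WordMap f w (u k)) (WordMap f w z) ≤ Dbar mlev := by
            have hshift := vRel_shift_word f w hmem
            exact hDbar_le mlev _ _ (vRel_antitone f (Nat.le_add_left mlev w.length) hshift)
          calc T (u k) z w ≤ E (WordMap f w (u k)) (WordMap f w z) / c w.length :=
              div_le_div_of_nonneg_right (min_le_left _ _) (hc_pos _).le
            _ ≤ Dbar mlev / c w.length := div_le_div_of_nonneg_right hEw (hc_pos _).le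
            _ ≤ Dbar mlev / c M :=
              div_le_div_of_nonneg_left (hDbar_nonneg mlev) (hc_pos M) (hc_anti w.length M hw.le)
            _ ≤ (η / 2 * c M) / c M := div_le_div_of_nonneg_right hmlev (hc_pos M).le
            _ = η / 2 := by
              rw [mul_div_assoc, div_self (hc_pos M).ne', mul_one]
      calc dist (u k) z = D (u k) z := rfl
        _ ≤ η / 2 := hD_le
        _ < η := by linarith
    by_cases hconst : ∃ z : X, ∀ n, ∃ k, KK n ≤ k ∧ u k = z
    · obtain ⟨z, hz⟩ := hconst
      refine ⟨z, hconv z fun n => ⟨KK n, fun k hk => ?_⟩⟩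
      obtain ⟨k', hk', hzz⟩ := hz n
      exact hzz ▸ hUV n k k' hk hk'
    · push_neg at hconst
      choose nz hnz using hconst
      set P : List I → Prop := fun w => ∃ k, KK w.length ≤ k ∧ u k ∈ WordSet f w with hP_def
      have hstabP : ∀ w mm, P w → P (w.take mm) := by
        rintro w mm ⟨k, hk, hmem⟩
        refine ⟨k, ?_, wordSet_take_subset f w mm hmem⟩
        refine le_trans (hKK_mono _ _ ?_) hk
        simp [List.length_take]
      have hexP : ∀ n, ∃ w : List I, w.length = n ∧ P w := by
        intro n
        have hne : u (max (KK n) (KK (nz (u (KK n))))) ≠ u (KK n) :=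
          hnz (u (KK n)) _ (le_max_right _ _)
        have hrel : (u (KK n), u (max (KK n) (KK (nz (u (KK n)))))) ∈ VRel f n :=
          hUV n _ _ le_rfl (le_max_left _ _)
        rcases hrel with heq | ⟨w, w', hl1, hl2, hm1, hm2, hne'⟩
        · exact absurd heq.symm hne
        · exact ⟨w', hl2, max (KK n) (KK (nz (u (KK n)))), by rw [hl2]; exact le_max_left _ _, hm2⟩
      obtain ⟨α, hα⟩ := konig_lists P hstabP hexP
      obtain ⟨z, hzmem⟩ := (hA α).exists
      refine ⟨z, hconv z fun n => ⟨KK (kc n), fun k hk => ?_⟩⟩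
      have hαn := hα (kc n)
      have hPkc : P (Pref α (kc n)) := hαn
      obtain ⟨k', hk', hmem⟩ := hPkc
      rw [pref_length] at hk'
      have h1 : (u k, u k') ∈ VRel f (kc n) := hUV (kc n) k k' hk hk'
      have h2 : (u k', z) ∈ VRel f (kc n) := Or.inr ⟨Pref α (kc n), Pref α (kc n),
        pref_length _, pref_length _, hmem, hzmem _, ⟨u k', hmem, hmem⟩⟩
      exact hkc2 n _ _ _ h1 h2
  exact ⟨m, φfn, hφ_comparison, hcomplete, ⟨c 0, fun x y => hD_le_c0 x y⟩,
    fun i x y => hD_contr i x y⟩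






end Backward


def Seg {I : Type*} (α : ℕ → I) (k m : ℕ) : List I := List.ofFn (fun j : Fin m => α (k + j))

lemma seg_add {I : Type*} (α : ℕ → I) (k p r : ℕ) :
    Seg α k (p + r) = Seg α k p ++ Seg α (k + p) r := by
  apply List.ext_getElem
  · simp [Seg]
  · intro i h1 h2
    simp only [Seg, List.getElem_ofFn]
    rcases lt_or_ge i p with h | h
    · rw [List.getElem_append_left (by simp [Seg]; omega)]
      simp
    · rw [List.getElem_append_right (by simp [Seg]; omega)]
      simp [Seg]
      congr 1
      omega

lemma pref_eq_seg {I : Type*} (α : ℕ → I) (n : ℕ) : Pref α n = Seg α 0 n := by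
  simp [Pref, Seg]

lemma pref_add {I : Type*} (α : ℕ → I) (k m : ℕ) :
    Pref α (k + m) = Pref α k ++ Seg α k m := by
  rw [pref_eq_seg, pref_eq_seg, seg_add]
  simp

lemma seg_length {I : Type*} (α : ℕ → I) (k m : ℕ) : (Seg α k m).length = m := by simp [Seg]

section Forward
set_option linter.unusedSectionVars false
set_option maxHeartbeats 1000000
variable {X I : Type*} [Finite I] [Nonempty I] [Nonempty X] {f : I → X → X}

lemma forward_direction (m : MetricSpace X) (φ : ℝ → ℝ) (hφ : IsComparisonFn φ)
    (hcompl : @CompleteSpace X m.toUniformSpace)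
    (C : ℝ) (hC : ∀ x y : X, m.dist x y ≤ C)
    (hcontr : ∀ i : I, ∀ x y : X, m.dist (f i x) (f i y) ≤ φ (m.dist x y)) :
    (∀ α : ℕ → I, ∃! a : X, ∀ n : ℕ, a ∈ WordSet f (Pref α n)) ∧
    (∀ α β : ℕ → I, ∀ a b : X,
      (∀ n : ℕ, a ∈ WordSet f (Pref α n)) → (∀ n : ℕ, b ∈ WordSet f (Pref β n)) →
      a ≠ b →
      ∃ n₀ : ℕ, WordSet f (Pref α n₀) ∩ WordSet f (Pref β n₀) = ∅) := by
  classical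
  letI := m
  haveI : CompleteSpace X := hcompl
  obtain ⟨x₀⟩ := ‹Nonempty X›
  obtain ⟨hφ0, hφmono, hφlt, hφrc⟩ := hφ
  have hC0 : 0 ≤ C := le_trans dist_nonneg (hC x₀ x₀)
  have hcontr' : ∀ (i : I) (x y : X), dist (f i x) (f i y) ≤ φ (dist x y) := hcontr
  have hC' : ∀ x y : X, dist x y ≤ C := hC
  have hφ00 : φ 0 = 0 := by
    by_contra h
    have hpos : 0 < φ 0 := lt_of_le_of_ne (hφ0 0 le_rfl) (Ne.symm h)
    have h1 : φ 0 ≤ φ (φ 0) := hφmono (le_refl (0:ℝ)) (hφ0 0 le_rfl) (hφ0 0 le_rfl)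
    have h2 : φ (φ 0) < φ 0 := hφlt _ hpos
    linarith
  have hφ_le_self : ∀ t : ℝ, 0 ≤ t → φ t ≤ t := by
    intro t ht
    rcases eq_or_lt_of_le ht with h | h
    · rw [← h, hφ00]
    · exact (hφlt t h).le
  have hiter_nonneg : ∀ (n : ℕ) (t : ℝ), 0 ≤ t → 0 ≤ φ^[n] t := by
    intro n
    induction n with
    | zero => intro t ht; simpa using ht
    | succ n ih =>
      intro t ht
      rw [Function.iterate_succ_apply']
      exact hφ0 _ (ih t ht)
  have hiter_mono : ∀ (n : ℕ) (a b : ℝ), 0 ≤ a → a ≤ b → φ^[n] a ≤ φ^[n] b := by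
    intro n
    induction n with
    | zero => intro a b _ h; simpa using h
    | succ n ih =>
      intro a b ha hab
      rw [Function.iterate_succ_apply', Function.iterate_succ_apply']
      exact hφmono (hiter_nonneg n a ha) (hiter_nonneg n b (le_trans ha hab)) (ih a b ha hab)
  have hiter_step : ∀ (n : ℕ) (t : ℝ), 0 ≤ t → φ^[n+1] t ≤ φ^[n] t := by
    intro n t ht
    rw [Function.iterate_succ_apply']
    exact hφ_le_self _ (hiter_nonneg n t ht)
  have hiter_anti : ∀ (t : ℝ), 0 ≤ t → ∀ (p q : ℕ), p ≤ q → φ^[q] t ≤ φ^[p] t := by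
    intro t ht p q hpq
    induction q with
    | zero => simp_all
    | succ q ih =>
      rcases Nat.lt_or_ge p (q+1) with h | h
      · exact le_trans (hiter_step q t ht) (ih (by omega))
      · have : p = q + 1 := by omega
        rw [this]
  have htendC : Tendsto (fun n => φ^[n] C) atTop (𝓝 0) := by
    have hanti : Antitone (fun n => φ^[n] C) := fun p q h => hiter_anti C hC0 p q h
    have hbdd : BddBelow (Set.range fun n => φ^[n] C) :=
      ⟨0, by rintro r ⟨n, rfl⟩; exact hiter_nonneg n C hC0⟩
    have hlim := tendsto_atTop_ciInf hanti hbdd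
    set L := ⨅ n, φ^[n] C with hL
    have hL_nonneg : 0 ≤ L := le_ciInf fun n => hiter_nonneg n C hC0
    rcases eq_or_lt_of_le hL_nonneg with h | h
    · rwa [← h] at hlim
    · exfalso
      have hLle : ∀ n, L ≤ φ^[n] C := fun n => ciInf_le hbdd n
      have hin : Tendsto (fun n => φ^[n] C) atTop (𝓝[Set.Ici L] L) := by
        rw [tendsto_nhdsWithin_iff]
        exact ⟨hlim, Eventually.of_forall fun n => hLle n⟩
      have hcomp := (hφrc L hL_nonneg).tendsto.comp hin
      have heq : (fun n => φ (φ^[n] C)) = fun n => φ^[n+1] C := by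
        funext n
        rw [Function.iterate_succ_apply']
      rw [show (φ ∘ fun n => φ^[n] C) = fun n => φ^[n+1] C from by
        funext n; simp [Function.iterate_succ_apply']] at hcomp
      have hshift : Tendsto (fun n => φ^[n+1] C) atTop (𝓝 L) :=
        hlim.comp (tendsto_add_atTop_nat 1)
      have : φ L = L := tendsto_nhds_unique hcomp hshift
      have := hφlt L h
      linarith
  have hword : ∀ (w : List I) (x y : X),
      dist (WordMap f w x) (WordMap f w y) ≤ φ^[w.length] (dist x y) := by
    intro w
    induction w with
    | nil => intro x y; simp [WordMap]
    | cons i w ih =>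
      intro x y
      have h1 : dist (WordMap f (i :: w) x) (WordMap f (i :: w) y) ≤
          φ (dist (WordMap f w x) (WordMap f w y)) := hcontr' i _ _
      have h2 : φ (dist (WordMap f w x) (WordMap f w y)) ≤ φ (φ^[w.length] (dist x y)) :=
        hφmono dist_nonneg (hiter_nonneg _ _ dist_nonneg) (ih x y)
      simp only [List.length_cons]
      rw [Function.iterate_succ_apply']
      exact le_trans h1 h2
  have hwordC : ∀ (w : List I) (x y : X),
      dist (WordMap f w x) (WordMap f w y) ≤ φ^[w.length] C := by
    intro w x y
    exact le_trans (hword w x y) (hiter_mono _ _ _ dist_nonneg (hC' x y))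
  have hlip : ∀ w : List I, LipschitzWith 1 (WordMap f w) := by
    intro w
    induction w with
    | nil => exact LipschitzWith.id
    | cons i w ih =>
      have hfi : LipschitzWith 1 (f i) := by
        apply LipschitzWith.of_dist_le_mul
        intro x y
        rw [NNReal.coe_one, one_mul]
        exact le_trans (hcontr' i x y) (hφ_le_self _ dist_nonneg)
      simpa [WordMap] using hfi.comp ih
  -- existence of limits along branches
  have hexists : ∀ (α : ℕ → I) (st : ℕ),
      ∃ y : X, Tendsto (fun md => WordMap f (Seg α st md) x₀) atTop (𝓝 y) := by
    intro α st
    apply cauchySeq_tendsto_of_complete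
    apply cauchySeq_of_le_tendsto_0 (fun n => φ^[n] C) _ htendC
    intro p q N hp hq
    wlog hpq : p ≤ q generalizing p q
    · rw [dist_comm]
      exact this q p hq hp (by omega)
    · obtain ⟨r, rfl⟩ := Nat.exists_eq_add_of_le hpq
      have hsplit : Seg α st (p + r) = Seg α st p ++ Seg α (st + p) r := seg_add α st p r
      have : WordMap f (Seg α st (p + r)) x₀ =
          WordMap f (Seg α st p) (WordMap f (Seg α (st + p) r) x₀) := by
        rw [hsplit, wordMap_append]
      rw [this]
      calc dist (WordMap f (Seg α st p) x₀)
            (WordMap f (Seg α st p) (WordMap f (Seg α (st + p) r) x₀))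
          ≤ φ^[(Seg α st p).length] C := hwordC _ _ _
        _ = φ^[p] C := by rw [seg_length]
        _ ≤ φ^[N] C := hiter_anti C hC0 N p hp
  have hmemlim : ∀ (α : ℕ → I) (a : X),
      Tendsto (fun k => WordMap f (Pref α k) x₀) atTop (𝓝 a) →
      ∀ n : ℕ, a ∈ WordSet f (Pref α n) := by
    intro α a ha n
    obtain ⟨y, hy⟩ := hexists α n
    have hcont : Tendsto (fun md => WordMap f (Pref α n) (WordMap f (Seg α n md) x₀))
        atTop (𝓝 (WordMap f (Pref α n) y)) := ((hlip (Pref α n)).continuous.tendsto y).comp hy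
    have heq : (fun md => WordMap f (Pref α n) (WordMap f (Seg α n md) x₀)) =
        fun md => WordMap f (Pref α (n + md)) x₀ := by
      funext md
      rw [pref_add, wordMap_append]
    rw [heq] at hcont
    have hshift : Tendsto (fun md => WordMap f (Pref α (n + md)) x₀) atTop (𝓝 a) := by
      have := ha.comp (tendsto_add_atTop_nat n)
      simpa [Function.comp_def, Nat.add_comm] using this
    have : a = WordMap f (Pref α n) y := tendsto_nhds_unique hshift hcont
    exact ⟨y, this.symm⟩
  have hsmalldist : ∀ (α : ℕ → I) (n : ℕ) (a c : X),
      a ∈ WordSet f (Pref α n) → c ∈ WordSet f (Pref α n) → dist a c ≤ φ^[n] C := by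
    rintro α n a c ⟨pa, rfl⟩ ⟨pc, rfl⟩
    have := hwordC (Pref α n) pa pc
    simpa [Pref] using this
  constructor
  · -- part (a)
    intro α
    obtain ⟨a, ha⟩ := hexists α 0
    have ha' : Tendsto (fun k => WordMap f (Pref α k) x₀) atTop (𝓝 a) := by
      have heq : (fun k => WordMap f (Pref α k) x₀) = fun k => WordMap f (Seg α 0 k) x₀ := by
        funext k
        rw [pref_eq_seg]
      rw [heq]
      exact ha
    refine ⟨a, hmemlim α a ha', ?_⟩
    intro a' ha'mem
    have hd : ∀ n, dist a' a ≤ φ^[n] C := fun n =>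
      hsmalldist α n a' a (ha'mem n) (hmemlim α a ha' n)
    have : dist a' a ≤ 0 := ge_of_tendsto' htendC hd |>.trans_eq rfl
    exact dist_le_zero.mp this
  · -- part (b)
    intro α β a b hamem hbmem hne
    have hdpos : 0 < dist a b := dist_pos.mpr hne
    have hsmall : ∃ n, φ^[n] C < dist a b / 2 := by
      have := (Metric.tendsto_atTop.mp htendC) (dist a b / 2) (by linarith)
      obtain ⟨N, hN⟩ := this
      refine ⟨N, ?_⟩
      have := hN N le_rfl
      rw [Real.dist_eq, sub_zero] at this
      calc φ^[N] C ≤ |φ^[N] C| := le_abs_self _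
        _ < dist a b / 2 := this
    obtain ⟨n, hn⟩ := hsmall
    refine ⟨n, ?_⟩
    by_contra hne'
    obtain ⟨cpt, hc1, hc2⟩ := Set.nonempty_iff_ne_empty.mpr hne'
    have hd1 : dist a cpt ≤ φ^[n] C := hsmalldist α n a cpt (hamem n) hc1
    have hd2 : dist b cpt ≤ φ^[n] C := hsmalldist β n b cpt (hbmem n) hc2
    have := dist_triangle a cpt b
    rw [dist_comm cpt b] at this
    linarith
end Forward

/-- **Theorem 3.22.** A finite family of self-maps of `X` admits a complete and bounded
metric making all its members `φ`-contractions for a single comparison function `φ`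
if and only if it has attractor. -/
theorem metric_comparison_iff_hasAttractor {X I : Type*} [Finite I] [Nonempty I]
    [Nonempty X] (f : I → X → X) :
    (∃ (m : MetricSpace X) (φ : ℝ → ℝ),
        IsComparisonFn φ ∧
        @CompleteSpace X m.toUniformSpace ∧
        (∃ C : ℝ, ∀ x y : X, m.dist x y ≤ C) ∧
        (∀ i : I, ∀ x y : X, m.dist (f i x) (f i y) ≤ φ (m.dist x y))) ↔
      ((∀ α : ℕ → I, ∃! a : X, ∀ n : ℕ, a ∈ WordSet f (Pref α n)) ∧
       (∀ α β : ℕ → I, ∀ a b : X,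
         (∀ n : ℕ, a ∈ WordSet f (Pref α n)) → (∀ n : ℕ, b ∈ WordSet f (Pref β n)) →
         a ≠ b →
         ∃ n₀ : ℕ, WordSet f (Pref α n₀) ∩ WordSet f (Pref β n₀) = ∅)) := by
  constructor
  · rintro ⟨m, φ, hφ, hcompl, ⟨C, hC⟩, hcontr⟩
    exact forward_direction m φ hφ hcompl C hC hcontr
  · rintro ⟨hA, hB⟩
    exact backward_direction hA hB
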